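/- For any p > 4, the function t ↦ f(t)^(p-1) · f'(t)/t is strictly increasing on (0, ∞). -/

import Mathlib

open Real Set

noncomputable def Hfun (u : ℝ) : ℝ :=
  u * (1 + 2*u^2) * Real.sqrt (1 + 2*u^2) / (3 + 4*u^2)

lemma Hfun_deriv (u : ℝ) :
    HasDerivAt Hfun ((3 + 26*u^2 + 56*u^4 + 32*u^6) /
      (Real.sqrt (1 + 2*u^2) * (3 + 4*u^2)^2)) u := by
  have hq : (0:ℝ) < 1 + 2*u^2 := by positivity
  have hs : 0 < Real.sqrt (1 + 2*u^2) := Real.sqrt_pos.2 hq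
  have hsq : Real.sqrt (1 + 2*u^2) ^ 2 = 1 + 2*u^2 := Real.sq_sqrt hq.le
  have hq' : HasDerivAt (fun u : ℝ => 1 + 2*u^2) (4*u) u := by
    have := ((hasDerivAt_pow 2 u).const_mul (2:ℝ)).const_add (1:ℝ)
    refine this.congr_deriv ?_; push_cast; ring
  have hsqrt : HasDerivAt (fun u : ℝ => Real.sqrt (1 + 2*u^2))
      (1 / (2 * Real.sqrt (1 + 2*u^2)) * (4*u)) u :=
    (Real.hasDerivAt_sqrt hq.ne').comp u hq'
  have hN : HasDerivAt (fun u : ℝ => u * (1 + 2*u^2) * Real.sqrt (1 + 2*u^2))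
      ((1 * (1 + 2*u^2) + u * (4*u)) * Real.sqrt (1 + 2*u^2)
        + u * (1 + 2*u^2) * (1 / (2 * Real.sqrt (1 + 2*u^2)) * (4*u))) u :=
    ((hasDerivAt_id u).mul hq').mul hsqrt
  have hD : HasDerivAt (fun u : ℝ => 3 + 4*u^2) (8*u) u := by
    have := ((hasDerivAt_pow 2 u).const_mul (4:ℝ)).const_add (3:ℝ)
    refine this.congr_deriv ?_; push_cast; ring
  have h := hN.div hD (by positivity)
  refine HasDerivAt.congr_deriv (f := Hfun) h ?_
  generalize Real.sqrt (1 + 2*u^2) = s at hsq hs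
  have e3 : s^3 = (1+2*u^2)*s := by rw [← hsq]; ring
  have h3 : (3:ℝ) + 4*u^2 ≠ 0 := by positivity
  field_simp
  ring_nf
  rw [hsq]
  ring

theorem stmt_11 (f : ℝ → ℝ) (hf0 : f 0 = 0) (hodd : ∀ t : ℝ, f (-t) = -f t)
    (hf1 : ∀ t : ℝ, 0 ≤ t → HasDerivAt f ((1 + 2 * f t ^ 2) ^ (-(1/2) : ℝ)) t) (p : ℝ) (hp : 4 < p) :
    StrictMonoOn (fun t : ℝ => f t ^ (p - 1) * deriv f t / t) (Set.Ioi 0) := by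
  have hq : ∀ x : ℝ, (0:ℝ) < 1 + 2 * f x ^ 2 := fun x => by positivity
  have hA : ∀ t : ℝ, 0 ≤ t → HasDerivAt f (Real.sqrt (1 + 2 * f t ^ 2))⁻¹ t := by
    intro t ht
    have h := hf1 t ht
    rwa [Real.rpow_neg (hq t).le, ← Real.sqrt_eq_rpow] at h
  have hspos : ∀ x : ℝ, 0 < Real.sqrt (1 + 2 * f x ^ 2) :=
    fun x => Real.sqrt_pos.2 (hq x)
  -- f positive on (0, ∞)
  have hmono : StrictMonoOn f (Ici 0) := by
    apply strictMonoOn_of_deriv_pos (convex_Ici 0)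
    · exact fun t ht => (hA t ht).continuousAt.continuousWithinAt
    · intro t ht
      rw [interior_Ici] at ht
      rw [(hA t ht.le).deriv]
      exact inv_pos.2 (hspos t)
  have hfpos : ∀ t : ℝ, 0 < t → 0 < f t := by
    intro t ht
    have := hmono self_mem_Ici (mem_Ici.2 ht.le) ht
    rwa [hf0] at this
  -- comparison: Hfun (f t) ≤ t for t ≥ 0
  have hKd : ∀ x : ℝ, 0 ≤ x → HasDerivAt (fun y => y - Hfun (f y))
      (1 - (3 + 26*(f x)^2 + 56*(f x)^4 + 32*(f x)^6) /
        (Real.sqrt (1 + 2*(f x)^2) * (3 + 4*(f x)^2)^2) * (Real.sqrt (1 + 2 * f x ^ 2))⁻¹) x := by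
    intro x hx
    exact (hasDerivAt_id x).sub ((Hfun_deriv (f x)).comp x (hA x hx))
  have hK : ∀ t : ℝ, 0 ≤ t → Hfun (f t) ≤ t := by
    have hmonoK : MonotoneOn (fun y => y - Hfun (f y)) (Ici 0) := by
      apply monotoneOn_of_deriv_nonneg (convex_Ici 0)
      · exact fun x hx => (hKd x hx).continuousAt.continuousWithinAt
      · intro x hx
        rw [interior_Ici] at hx
        exact (hKd x hx.le).differentiableAt.differentiableWithinAt
      · intro x hx
        rw [interior_Ici] at hx
        rw [(hKd x hx.le).deriv, sub_nonneg]
        have hqx := hq x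
        have hsx := hspos x
        have hsqx : Real.sqrt (1 + 2 * f x ^ 2) ^ 2 = 1 + 2 * f x ^ 2 :=
          Real.sq_sqrt (hqx).le
        have key2 : (3 + 26*(f x)^2 + 56*(f x)^4 + 32*(f x)^6) /
            (Real.sqrt (1 + 2*(f x)^2) * (3 + 4*(f x)^2)^2) * (Real.sqrt (1 + 2 * f x ^ 2))⁻¹
            = (3 + 26*(f x)^2 + 56*(f x)^4 + 32*(f x)^6) / ((1 + 2*(f x)^2) * (3 + 4*(f x)^2)^2) := by
          generalize Real.sqrt (1 + 2 * f x ^ 2) = s at hsqx hsx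
          rw [← hsqx, ← div_eq_mul_inv, div_div]
          congr 1
          ring
        rw [key2, div_le_one (by positivity)]
        nlinarith [sq_nonneg (f x), sq_nonneg ((f x)^2), sq_nonneg ((f x)^3)]
    intro t ht
    have h0 := hmonoK self_mem_Ici (mem_Ici.2 ht) ht
    have hH0 : Hfun (f 0) = 0 := by rw [hf0]; simp [Hfun]
    simp only [hH0, sub_zero] at h0
    linarith
  -- key: derivative of g is positive on Ioi 0
  have key : ∀ t ∈ Ioi (0:ℝ), ∃ G : ℝ,
      HasDerivAt (fun x : ℝ => f x ^ (p - 1) * deriv f x / x) G t ∧ 0 < G := by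
    intro t ht
    rw [mem_Ioi] at ht
    have hu : 0 < f t := hfpos t ht
    have hqt := hq t
    have hst := hspos t
    have hsq : Real.sqrt (1 + 2 * f t ^ 2) ^ 2 = 1 + 2 * f t ^ 2 := Real.sq_sqrt hqt.le
    have hF : HasDerivAt f (Real.sqrt (1 + 2 * f t ^ 2))⁻¹ t := hA t ht.le
    have hpow : HasDerivAt (fun x => 1 + 2 * f x ^ 2)
        (2 * ((2:ℕ) * f t ^ (2-1) * (Real.sqrt (1 + 2 * f t ^ 2))⁻¹)) t :=
      ((hF.pow 2).const_mul (2:ℝ)).const_add 1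
    have hsqrtc : HasDerivAt (fun x => Real.sqrt (1 + 2 * f x ^ 2))
        (1 / (2 * Real.sqrt (1 + 2 * f t ^ 2)) *
          (2 * ((2:ℕ) * f t ^ (2-1) * (Real.sqrt (1 + 2 * f t ^ 2))⁻¹))) t :=
      (Real.hasDerivAt_sqrt hqt.ne').comp t hpow
    have hinv := hsqrtc.inv hst.ne'
    have hrpow : HasDerivAt (fun x => f x ^ (p - 1))
        ((p - 1) * f t ^ (p - 1 - 1) * (Real.sqrt (1 + 2 * f t ^ 2))⁻¹) t :=
      (Real.hasDerivAt_rpow_const (Or.inl hu.ne')).comp t hF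
    have hdiv := (hrpow.mul hinv).div (hasDerivAt_id t) ht.ne'
    have heq : (fun x : ℝ => f x ^ (p - 1) * deriv f x / x)
        =ᶠ[nhds t] (fun x => f x ^ (p - 1) * (Real.sqrt (1 + 2 * f x ^ 2))⁻¹ / x) := by
      filter_upwards [Ioi_mem_nhds ht] with x hx
      rw [(hA x (le_of_lt hx)).deriv]
    have hg := hdiv.congr_of_eventuallyEq heq
    refine ⟨_, hg, ?_⟩
    -- positivity of the derivative
    have ha : 0 < f t ^ (p - 2) := Real.rpow_pos_of_pos hu _
    have e1 : f t ^ (p - 1) = f t ^ (p - 2) * f t := by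
      rw [show p - 1 = p - 2 + 1 by ring, Real.rpow_add_one hu.ne']
    have e2 : p - 1 - 1 = p - 2 := by ring
    have hHle : f t * (1 + 2 * f t ^ 2) * Real.sqrt (1 + 2 * f t ^ 2)
        ≤ t * (3 + 4 * f t ^ 2) := by
      have h1 := hK t ht.le
      unfold Hfun at h1
      rw [div_le_iff₀ (by positivity)] at h1
      nlinarith [h1]
    have hnum : 0 < t * (p-1) * (1 + 2 * f t ^ 2) - 2 * t * f t ^ 2
        - f t * (1 + 2 * f t ^ 2) * Real.sqrt (1 + 2 * f t ^ 2) := by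
      nlinarith [mul_pos (mul_pos ht (sub_pos.2 hp)) hqt]
    have h9 : 0 < f t ^ (p - 2) * (t * (p-1) * (1 + 2 * f t ^ 2) - 2 * t * f t ^ 2
        - f t * (1 + 2 * f t ^ 2) * Real.sqrt (1 + 2 * f t ^ 2))
        / (t^2 * (1 + 2 * f t ^ 2)^2) := div_pos (mul_pos ha hnum) (by positivity)
    convert h9 using 1
    simp only [Pi.inv_apply, Pi.mul_apply, id]
    rw [e1, e2]
    generalize Real.sqrt (1 + 2 * f t ^ 2) = s at hsq hst
    have e3 : s^3 = (1 + 2 * f t ^ 2) * s := by rw [← hsq]; ring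
    rw [← hsq]
    field_simp
    ring
  -- conclude
  apply strictMonoOn_of_deriv_pos (convex_Ioi 0)
  · intro t ht
    obtain ⟨G, hG, -⟩ := key t ht
    exact hG.continuousAt.continuousWithinAt
  · intro t ht
    rw [interior_Ioi] at ht
    obtain ⟨G, hG, hGpos⟩ := key t ht
    rw [hG.deriv]
    exact hGpos
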